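/- Let T > 0, ε₀ ∈ ℝ, and let v = (v₁,v₂) : ℝ² × (0,T) → ℝ², P : ℝ² × (0,T) → ℝ, u = (u₁,u₂,u₃) : ℝ² × (0,T) → ℝ³ be of class C² in x and C¹ in t, satisfying at every point (x,t) with x₂ ≥ 0: ∂_t v + (v·∇)v + ∇P = Δv − ε₀ ∇·(∇u ⊙ ∇u − (1/2)|∇u|² 𝕀₂), ∇·v = 0, and ∂_t u + (v·∇)u = Δu + |∇u|² u; and satisfying at every boundary point (x₁, 0, t): ∂_{x₂}v₁ = 0, v₂ = 0, ∂_{x₂}u₁ = 0, ∂_{x₂}u₂ = 0, and u₃ = 0. Then ∂_{x₂}P(x₁, 0, t) = 0 for all x₁ ∈ ℝ and t ∈ (0,T). -/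

import Mathlib

/-- Partial derivative in the first spatial variable. -/
noncomputable def pd1 (f : ℝ → ℝ → ℝ) (x y : ℝ) : ℝ := deriv (fun s => f s y) x

/-- Partial derivative in the second spatial variable. -/
noncomputable def pd2 (f : ℝ → ℝ → ℝ) (x y : ℝ) : ℝ := deriv (fun s => f x s) y

/-- The `i`-th spatial partial derivative, `i : Fin 2`. -/
noncomputable def pdi (i : Fin 2) (f : ℝ → ℝ → ℝ) (x y : ℝ) : ℝ :=
  if i = 0 then pd1 f x y else pd2 f x y

/-- The Laplacian on `ℝ²`. -/
noncomputable def lapl (f : ℝ → ℝ → ℝ) (x y : ℝ) : ℝ :=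
  pd1 (pd1 f) x y + pd2 (pd2 f) x y

/-- `|∇u|²` for a map into `ℝ³`. -/
noncomputable def gradSq3 (u : Fin 3 → ℝ → ℝ → ℝ) (x y : ℝ) : ℝ :=
  ∑ k : Fin 3, ((pd1 (u k) x y) ^ 2 + (pd2 (u k) x y) ^ 2)

open Set

section helpers

variable {f : ℝ → ℝ → ℝ}

lemma hasDerivAt_1 (hw : ContDiff ℝ 2 (fun p : ℝ × ℝ => f p.1 p.2)) (x y : ℝ) :
    HasDerivAt (fun s => f s y) (fderiv ℝ (fun p : ℝ × ℝ => f p.1 p.2) (x, y) (1, 0)) x := by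
  have h1 : HasFDerivAt (fun p : ℝ × ℝ => f p.1 p.2)
      (fderiv ℝ (fun p : ℝ × ℝ => f p.1 p.2) (x, y)) (x, y) :=
    (hw.differentiable (by norm_num) (x, y)).hasFDerivAt
  have h2 : HasDerivAt (fun s : ℝ => ((s, y) : ℝ × ℝ)) (1, 0) x :=
    HasDerivAt.prodMk (hasDerivAt_id x) (hasDerivAt_const x y)
  exact h1.comp_hasDerivAt x h2

lemma hasDerivAt_2 (hw : ContDiff ℝ 2 (fun p : ℝ × ℝ => f p.1 p.2)) (x y : ℝ) :
    HasDerivAt (fun s => f x s) (fderiv ℝ (fun p : ℝ × ℝ => f p.1 p.2) (x, y) (0, 1)) y := by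
  have h1 : HasFDerivAt (fun p : ℝ × ℝ => f p.1 p.2)
      (fderiv ℝ (fun p : ℝ × ℝ => f p.1 p.2) (x, y)) (x, y) :=
    (hw.differentiable (by norm_num) (x, y)).hasFDerivAt
  have h2 : HasDerivAt (fun s : ℝ => ((x, s) : ℝ × ℝ)) (0, 1) y :=
    HasDerivAt.prodMk (hasDerivAt_const y x) (hasDerivAt_id y)
  exact h1.comp_hasDerivAt y h2

lemma pd1_eq (hw : ContDiff ℝ 2 (fun p : ℝ × ℝ => f p.1 p.2)) (x y : ℝ) :
    pd1 f x y = fderiv ℝ (fun p : ℝ × ℝ => f p.1 p.2) (x, y) (1, 0) :=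
  (hasDerivAt_1 hw x y).deriv

lemma pd2_eq (hw : ContDiff ℝ 2 (fun p : ℝ × ℝ => f p.1 p.2)) (x y : ℝ) :
    pd2 f x y = fderiv ℝ (fun p : ℝ × ℝ => f p.1 p.2) (x, y) (0, 1) :=
  (hasDerivAt_2 hw x y).deriv

lemma hasDerivAt_snd_fderiv (hw : ContDiff ℝ 2 (fun p : ℝ × ℝ => f p.1 p.2)) (x y : ℝ)
    (e : ℝ × ℝ) :
    HasDerivAt (fun b => fderiv ℝ (fun p : ℝ × ℝ => f p.1 p.2) (x, b) e)
      (fderiv ℝ (fderiv ℝ (fun p : ℝ × ℝ => f p.1 p.2)) (x, y) (0, 1) e) y := by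
  set w := fun p : ℝ × ℝ => f p.1 p.2
  have hg : Differentiable ℝ (fderiv ℝ w) :=
    (hw.fderiv_right (m := 1) (by norm_num)).differentiable (by norm_num)
  have h1 : HasFDerivAt (fderiv ℝ w) (fderiv ℝ (fderiv ℝ w) (x, y)) (x, y) :=
    (hg (x, y)).hasFDerivAt
  have h2 : HasDerivAt (fun b : ℝ => ((x, b) : ℝ × ℝ)) (0, 1) y :=
    HasDerivAt.prodMk (hasDerivAt_const y x) (hasDerivAt_id y)
  have h3 : HasDerivAt (fun b => fderiv ℝ w (x, b))
      (fderiv ℝ (fderiv ℝ w) (x, y) (0, 1)) y := h1.comp_hasDerivAt y h2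
  simpa using h3.clm_apply (hasDerivAt_const y e)

lemma hasDerivAt_fst_fderiv (hw : ContDiff ℝ 2 (fun p : ℝ × ℝ => f p.1 p.2)) (x y : ℝ)
    (e : ℝ × ℝ) :
    HasDerivAt (fun a => fderiv ℝ (fun p : ℝ × ℝ => f p.1 p.2) (a, y) e)
      (fderiv ℝ (fderiv ℝ (fun p : ℝ × ℝ => f p.1 p.2)) (x, y) (1, 0) e) x := by
  set w := fun p : ℝ × ℝ => f p.1 p.2
  have hg : Differentiable ℝ (fderiv ℝ w) :=
    (hw.fderiv_right (m := 1) (by norm_num)).differentiable (by norm_num)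
  have h1 : HasFDerivAt (fderiv ℝ w) (fderiv ℝ (fderiv ℝ w) (x, y)) (x, y) :=
    (hg (x, y)).hasFDerivAt
  have h2 : HasDerivAt (fun a : ℝ => ((a, y) : ℝ × ℝ)) (1, 0) x :=
    HasDerivAt.prodMk (hasDerivAt_id x) (hasDerivAt_const x y)
  have h3 : HasDerivAt (fun a => fderiv ℝ w (a, y))
      (fderiv ℝ (fderiv ℝ w) (x, y) (1, 0)) x := h1.comp_hasDerivAt x h2
  simpa using h3.clm_apply (hasDerivAt_const x e)

lemma hasDerivAt_pd2_pd1 (hw : ContDiff ℝ 2 (fun p : ℝ × ℝ => f p.1 p.2)) (x y : ℝ) :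
    HasDerivAt (fun b => pd1 f x b)
      (fderiv ℝ (fderiv ℝ (fun p : ℝ × ℝ => f p.1 p.2)) (x, y) (0, 1) (1, 0)) y := by
  have := hasDerivAt_snd_fderiv hw x y (1, 0)
  exact this.congr_of_eventuallyEq (Filter.Eventually.of_forall fun b => (pd1_eq hw x b))

lemma hasDerivAt_pd2_pd2 (hw : ContDiff ℝ 2 (fun p : ℝ × ℝ => f p.1 p.2)) (x y : ℝ) :
    HasDerivAt (fun b => pd2 f x b)
      (fderiv ℝ (fderiv ℝ (fun p : ℝ × ℝ => f p.1 p.2)) (x, y) (0, 1) (0, 1)) y := by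
  have := hasDerivAt_snd_fderiv hw x y (0, 1)
  exact this.congr_of_eventuallyEq (Filter.Eventually.of_forall fun b => (pd2_eq hw x b))

lemma hasDerivAt_pd1_pd2 (hw : ContDiff ℝ 2 (fun p : ℝ × ℝ => f p.1 p.2)) (x y : ℝ) :
    HasDerivAt (fun a => pd2 f a y)
      (fderiv ℝ (fderiv ℝ (fun p : ℝ × ℝ => f p.1 p.2)) (x, y) (1, 0) (0, 1)) x := by
  have := hasDerivAt_fst_fderiv hw x y (0, 1)
  exact this.congr_of_eventuallyEq (Filter.Eventually.of_forall fun a => (pd2_eq hw a y))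

/-- Clairaut's theorem for `pd1`/`pd2`. -/
lemma clairaut (hw : ContDiff ℝ 2 (fun p : ℝ × ℝ => f p.1 p.2)) (x y : ℝ) :
    pd2 (pd1 f) x y = pd1 (pd2 f) x y := by
  have hs : IsSymmSndFDerivAt ℝ (fun p : ℝ × ℝ => f p.1 p.2) (x, y) :=
    hw.contDiffAt.isSymmSndFDerivAt (by norm_num)
  have h1 : pd2 (pd1 f) x y
      = fderiv ℝ (fderiv ℝ (fun p : ℝ × ℝ => f p.1 p.2)) (x, y) (0, 1) (1, 0) :=
    (hasDerivAt_pd2_pd1 hw x y).deriv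
  have h2 : pd1 (pd2 f) x y
      = fderiv ℝ (fderiv ℝ (fun p : ℝ × ℝ => f p.1 p.2)) (x, y) (1, 0) (0, 1) :=
    (hasDerivAt_pd1_pd2 hw x y).deriv
  rw [h1, h2, hs (0,1) (1,0)]

lemma onesided {F G : ℝ → ℝ} {a c : ℝ} (hF : HasDerivAt F a 0) (hG : HasDerivAt G c 0)
    (h : ∀ s : ℝ, 0 ≤ s → F s = G s) : a = c := by
  have h1 : HasDerivWithinAt F a (Ici 0) 0 := hF.hasDerivWithinAt
  have h2 : HasDerivWithinAt G c (Ici 0) 0 := hG.hasDerivWithinAt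
  have h3 : HasDerivWithinAt F c (Ici 0) 0 := h2.congr (fun s hs => h s hs) (h 0 le_rfl)
  have hu : UniqueDiffWithinAt ℝ (Ici (0:ℝ)) 0 := uniqueDiffOn_Ici 0 0 self_mem_Ici
  rw [← h1.derivWithin hu, ← h3.derivWithin hu]

lemma pd1_zero {g : ℝ → ℝ → ℝ} (h : ∀ a, g a 0 = 0) (x : ℝ) : pd1 g x 0 = 0 := by
  have h2 : (fun s => g s 0) = fun _ => (0:ℝ) := funext h
  simp [pd1, h2]

end helpers


/-- If `(v,P,u)` solves the full nematic liquid crystal system on the closed upper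
half-plane with the partially free boundary conditions
`∂_{x₂}v₁ = v₂ = ∂_{x₂}u₁ = ∂_{x₂}u₂ = u₃ = 0` on `{x₂ = 0}`, then the normal
derivative of the pressure vanishes on the boundary: `∂_{x₂}P(x₁,0,t) = 0`. -/
theorem stmt10 (T ε₀ : ℝ) (hT : 0 < T)
    (v : Fin 2 → ℝ → ℝ → ℝ → ℝ) (P : ℝ → ℝ → ℝ → ℝ) (u : Fin 3 → ℝ → ℝ → ℝ → ℝ)
    (hvx : ∀ i, ∀ t ∈ Set.Ioo (0 : ℝ) T, ContDiff ℝ 2 (fun p : ℝ × ℝ => v i p.1 p.2 t))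
    (hPx : ∀ t ∈ Set.Ioo (0 : ℝ) T, ContDiff ℝ 2 (fun p : ℝ × ℝ => P p.1 p.2 t))
    (hux : ∀ k, ∀ t ∈ Set.Ioo (0 : ℝ) T, ContDiff ℝ 2 (fun p : ℝ × ℝ => u k p.1 p.2 t))
    (hvt : ∀ i x₁ x₂, ContDiffOn ℝ 1 (fun t => v i x₁ x₂ t) (Set.Ioo (0 : ℝ) T))
    (hPt : ∀ x₁ x₂, ContDiffOn ℝ 1 (fun t => P x₁ x₂ t) (Set.Ioo (0 : ℝ) T))
    (hut : ∀ k x₁ x₂, ContDiffOn ℝ 1 (fun t => u k x₁ x₂ t) (Set.Ioo (0 : ℝ) T))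
    (hmom : ∀ x₁ x₂ : ℝ, 0 ≤ x₂ → ∀ t ∈ Set.Ioo (0 : ℝ) T, ∀ i : Fin 2,
      deriv (fun s => v i x₁ x₂ s) t
          + v 0 x₁ x₂ t * pd1 (fun a b => v i a b t) x₁ x₂
          + v 1 x₁ x₂ t * pd2 (fun a b => v i a b t) x₁ x₂
          + pdi i (fun a b => P a b t) x₁ x₂
        = lapl (fun a b => v i a b t) x₁ x₂
          - ε₀ * ∑ j : Fin 2, pdi j (fun a b =>
              (∑ k : Fin 3, pdi i (fun a' b' => u k a' b' t) a b *
                  pdi j (fun a' b' => u k a' b' t) a b)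
                - (if i = j then (1 / 2) * gradSq3 (fun k a' b' => u k a' b' t) a b
                   else 0)) x₁ x₂)
    (hdiv : ∀ x₁ x₂ : ℝ, 0 ≤ x₂ → ∀ t ∈ Set.Ioo (0 : ℝ) T,
      pd1 (fun a b => v 0 a b t) x₁ x₂ + pd2 (fun a b => v 1 a b t) x₁ x₂ = 0)
    (hflow : ∀ x₁ x₂ : ℝ, 0 ≤ x₂ → ∀ t ∈ Set.Ioo (0 : ℝ) T, ∀ k : Fin 3,
      deriv (fun s => u k x₁ x₂ s) t
          + v 0 x₁ x₂ t * pd1 (fun a b => u k a b t) x₁ x₂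
          + v 1 x₁ x₂ t * pd2 (fun a b => u k a b t) x₁ x₂
        = lapl (fun a b => u k a b t) x₁ x₂
          + gradSq3 (fun k a b => u k a b t) x₁ x₂ * u k x₁ x₂ t)
    (hbc : ∀ x₁ : ℝ, ∀ t ∈ Set.Ioo (0 : ℝ) T,
      pd2 (fun a b => v 0 a b t) x₁ 0 = 0 ∧ v 1 x₁ 0 t = 0 ∧
      pd2 (fun a b => u 0 a b t) x₁ 0 = 0 ∧ pd2 (fun a b => u 1 a b t) x₁ 0 = 0 ∧
      u 2 x₁ 0 t = 0) :
    ∀ x₁ : ℝ, ∀ t ∈ Set.Ioo (0 : ℝ) T, pd2 (fun a b => P a b t) x₁ 0 = 0 := by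
  intro x₁ t ht
  have hmem : Ioo (0:ℝ) T ∈ nhds t := isOpen_Ioo.mem_nhds ht
  -- boundary facts
  have hv1b : ∀ a, v 1 a 0 t = 0 := fun a => (hbc a t ht).2.1
  have hu2b : ∀ a, u 2 a 0 t = 0 := fun a => (hbc a t ht).2.2.2.2
  have hq0 : ∀ a, pd2 (fun a b => u 0 a b t) a 0 = 0 := fun a => (hbc a t ht).2.2.1
  have hq1 : ∀ a, pd2 (fun a b => u 1 a b t) a 0 = 0 := fun a => (hbc a t ht).2.2.2.1
  have hv0n : ∀ a, pd2 (fun a b => v 0 a b t) a 0 = 0 := fun a => (hbc a t ht).1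
  have hp2 : ∀ a, pd1 (fun a b => u 2 a b t) a 0 = 0 := fun a => pd1_zero hu2b a
  -- time derivative of v 1 vanishes on boundary
  have hdtv : deriv (fun s => v 1 x₁ 0 s) t = 0 := by
    have he : (fun s => v 1 x₁ 0 s) =ᶠ[nhds t] fun _ => (0:ℝ) :=
      Filter.eventuallyEq_of_mem hmem (fun s hs => (hbc x₁ s hs).2.1)
    rw [he.deriv_eq]; exact deriv_const _ _
  -- tangential derivatives of v 1 vanish
  have hp1v1 : pd1 (fun a b => v 1 a b t) x₁ 0 = 0 := pd1_zero hv1b x₁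
  have hL1 : pd1 (pd1 fun a b => v 1 a b t) x₁ 0 = 0 :=
    pd1_zero (fun a => pd1_zero hv1b a) x₁
  -- normal-normal second derivative of v 1 vanishes via divergence-free + Clairaut
  have hL2 : pd2 (pd2 fun a b => v 1 a b t) x₁ 0 = 0 := by
    have h1 := hasDerivAt_pd2_pd2 (f := fun a b => v 1 a b t) (hvx 1 t ht) x₁ 0
    have h2 := (hasDerivAt_pd2_pd1 (f := fun a b => v 0 a b t) (hvx 0 t ht) x₁ 0).neg
    have heq := onesided h1 h2 (fun s hs => by
      have := hdiv x₁ s hs t ht; simp only [Pi.neg_apply]; linarith)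
    have hA : pd2 (pd2 fun a b => v 1 a b t) x₁ 0
        = fderiv ℝ (fderiv ℝ (fun p : ℝ × ℝ => v 1 p.1 p.2 t)) (x₁, 0) (0, 1) (0, 1) :=
      h1.deriv
    have hB : pd2 (pd1 fun a b => v 0 a b t) x₁ 0
        = fderiv ℝ (fderiv ℝ (fun p : ℝ × ℝ => v 0 p.1 p.2 t)) (x₁, 0) (0, 1) (1, 0) :=
      (hasDerivAt_pd2_pd1 (f := fun a b => v 0 a b t) (hvx 0 t ht) x₁ 0).deriv
    have hC : pd2 (pd1 fun a b => v 0 a b t) x₁ 0 = 0 := by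
      rw [clairaut (hvx 0 t ht) x₁ 0]
      exact pd1_zero hv0n x₁
    rw [hA, heq, ← hB, hC, neg_zero]
  -- second derivatives of u: mixed ones for k=0,1
  have hDp0 : pd2 (pd1 fun a b => u 0 a b t) x₁ 0 = 0 := by
    rw [clairaut (hux 0 t ht) x₁ 0]; exact pd1_zero hq0 x₁
  have hDp1 : pd2 (pd1 fun a b => u 1 a b t) x₁ 0 = 0 := by
    rw [clairaut (hux 1 t ht) x₁ 0]; exact pd1_zero hq1 x₁
  -- normal-normal second derivative of u 2 vanishes by the flow equation
  have hDq2 : pd2 (pd2 fun a b => u 2 a b t) x₁ 0 = 0 := by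
    have hF := hflow x₁ 0 le_rfl t ht 2
    have hdtu : deriv (fun s => u 2 x₁ 0 s) t = 0 := by
      have he : (fun s => u 2 x₁ 0 s) =ᶠ[nhds t] fun _ => (0:ℝ) :=
        Filter.eventuallyEq_of_mem hmem (fun s hs => (hbc x₁ s hs).2.2.2.2)
      rw [he.deriv_eq]; exact deriv_const _ _
    have h11 : pd1 (pd1 fun a b => u 2 a b t) x₁ 0 = 0 :=
      pd1_zero (fun a => pd1_zero hu2b a) x₁
    rw [lapl] at hF
    rw [hdtu, hp2 x₁, hv1b x₁, hu2b x₁, h11] at hF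
    simp at hF
    linarith
  -- derivative facts for the stress computation
  have hD1 : ∀ k : Fin 3, HasDerivAt (fun b => pd1 (fun a' b' => u k a' b' t) x₁ b)
      (pd2 (pd1 fun a' b' => u k a' b' t) x₁ 0) 0 := by
    intro k
    have h := hasDerivAt_pd2_pd1 (f := fun a' b' => u k a' b' t) (hux k t ht) x₁ 0
    have e : pd2 (pd1 fun a' b' => u k a' b' t) x₁ 0
        = fderiv ℝ (fderiv ℝ (fun p : ℝ × ℝ => u k p.1 p.2 t)) (x₁, 0) (0, 1) (1, 0) := h.deriv
    rw [e]; exact h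
  have hD2 : ∀ k : Fin 3, HasDerivAt (fun b => pd2 (fun a' b' => u k a' b' t) x₁ b)
      (pd2 (pd2 fun a' b' => u k a' b' t) x₁ 0) 0 := by
    intro k
    have h := hasDerivAt_pd2_pd2 (f := fun a' b' => u k a' b' t) (hux k t ht) x₁ 0
    have e : pd2 (pd2 fun a' b' => u k a' b' t) x₁ 0
        = fderiv ℝ (fderiv ℝ (fun p : ℝ × ℝ => u k p.1 p.2 t)) (x₁, 0) (0, 1) (0, 1) := h.deriv
    rw [e]; exact h
  -- first stress component vanishes identically on the boundary
  have hS0 : pd1 (fun a b =>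
      pd2 (fun a' b' => u 0 a' b' t) a b * pd1 (fun a' b' => u 0 a' b' t) a b +
          pd2 (fun a' b' => u 1 a' b' t) a b * pd1 (fun a' b' => u 1 a' b' t) a b +
        pd2 (fun a' b' => u 2 a' b' t) a b * pd1 (fun a' b' => u 2 a' b' t) a b) x₁ 0 = 0 := by
    refine pd1_zero (fun a => ?_) x₁
    rw [hq0 a, hq1 a, hp2 a]
    ring
  -- second stress component: compute its normal derivative and show it vanishes
  have hS1 : pd2 (fun a b =>
      pd2 (fun a' b' => u 0 a' b' t) a b * pd2 (fun a' b' => u 0 a' b' t) a b +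
            pd2 (fun a' b' => u 1 a' b' t) a b * pd2 (fun a' b' => u 1 a' b' t) a b +
          pd2 (fun a' b' => u 2 a' b' t) a b * pd2 (fun a' b' => u 2 a' b' t) a b -
        1 / 2 *
          (pd1 (fun a' b' => u 0 a' b' t) a b ^ 2 + pd2 (fun a' b' => u 0 a' b' t) a b ^ 2 +
              (pd1 (fun a' b' => u 1 a' b' t) a b ^ 2 + pd2 (fun a' b' => u 1 a' b' t) a b ^ 2) +
            (pd1 (fun a' b' => u 2 a' b' t) a b ^ 2 + pd2 (fun a' b' => u 2 a' b' t) a b ^ 2)))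
      x₁ 0 = 0 := by
    have hder := ((((hD2 0).mul (hD2 0)).add ((hD2 1).mul (hD2 1))).add
        ((hD2 2).mul (hD2 2))).sub
      (((((((hD1 0).pow 2).add ((hD2 0).pow 2)).add
          (((hD1 1).pow 2).add ((hD2 1).pow 2))).add
          (((hD1 2).pow 2).add ((hD2 2).pow 2))).const_mul (1/2 : ℝ)))
    have hval : pd2 (pd2 fun a' b' => u 0 a' b' t) x₁ 0 * pd2 (fun a' b' => u 0 a' b' t) x₁ 0 +
          pd2 (fun a' b' => u 0 a' b' t) x₁ 0 * pd2 (pd2 fun a' b' => u 0 a' b' t) x₁ 0 +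
            (pd2 (pd2 fun a' b' => u 1 a' b' t) x₁ 0 * pd2 (fun a' b' => u 1 a' b' t) x₁ 0 +
              pd2 (fun a' b' => u 1 a' b' t) x₁ 0 * pd2 (pd2 fun a' b' => u 1 a' b' t) x₁ 0) +
            (pd2 (pd2 fun a' b' => u 2 a' b' t) x₁ 0 * pd2 (fun a' b' => u 2 a' b' t) x₁ 0 +
              pd2 (fun a' b' => u 2 a' b' t) x₁ 0 * pd2 (pd2 fun a' b' => u 2 a' b' t) x₁ 0) -
          1 / 2 *
            ((2 : ℕ) * pd1 (fun a' b' => u 0 a' b' t) x₁ 0 ^ 1 *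
                pd2 (pd1 fun a' b' => u 0 a' b' t) x₁ 0 +
              (2 : ℕ) * pd2 (fun a' b' => u 0 a' b' t) x₁ 0 ^ 1 *
                pd2 (pd2 fun a' b' => u 0 a' b' t) x₁ 0 +
              ((2 : ℕ) * pd1 (fun a' b' => u 1 a' b' t) x₁ 0 ^ 1 *
                  pd2 (pd1 fun a' b' => u 1 a' b' t) x₁ 0 +
                (2 : ℕ) * pd2 (fun a' b' => u 1 a' b' t) x₁ 0 ^ 1 *
                  pd2 (pd2 fun a' b' => u 1 a' b' t) x₁ 0) +
              ((2 : ℕ) * pd1 (fun a' b' => u 2 a' b' t) x₁ 0 ^ 1 *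
                  pd2 (pd1 fun a' b' => u 2 a' b' t) x₁ 0 +
                (2 : ℕ) * pd2 (fun a' b' => u 2 a' b' t) x₁ 0 ^ 1 *
                  pd2 (pd2 fun a' b' => u 2 a' b' t) x₁ 0)) = 0 := by
      rw [hq0 x₁, hq1 x₁, hp2 x₁, hDp0, hDp1, hDq2]
      ring
    exact (hval ▸ hder).deriv
  -- now assemble the momentum equation for the second component
  have H := hmom x₁ 0 le_rfl t ht 1
  simp only [pdi, Fin.sum_univ_two, Fin.isValue, reduceIte, lapl, gradSq3, Fin.sum_univ_three,
    one_ne_zero, if_false, sub_zero] at H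
  rw [hdtv, hp1v1, hv1b x₁, hL1, hL2, hS0, hS1] at H
  linarith
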